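/- Let X and Y be separable Hilbert spaces such that Y is compactly and densely embedded into X. Then there exists an orthonormal basis (e_n) of X consisting of elements of Y that is simultaneously orthogonal in Y, and moreover the norms satisfy ‖e_n‖_Y → ∞ (equivalently ‖e_n‖_Y^{-1} → 0). -/

import Mathlib

open Filter

local notation "⟪" x ", " y "⟫" => @inner ℝ _ _ x y

/-- Cauchy–Schwarz for a positive symmetric operator. -/
lemma posCS {F : Type*} [NormedAddCommGroup F] [InnerProductSpace ℝ F]
    (T : F →L[ℝ] F) (hsym : ∀ x y : F, ⟪T x, y⟫ = ⟪x, T y⟫)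
    (hpos : ∀ x : F, 0 ≤ ⟪T x, x⟫) (x y : F) :
    ⟪T x, y⟫ ^ 2 ≤ ⟪T x, x⟫ * ⟪T y, y⟫ := by
  have key : ∀ t : ℝ, 0 ≤ ⟪T y, y⟫ * (t * t) + (2 * ⟪T x, y⟫) * t + ⟪T x, x⟫ := by
    intro t
    have h0 := hpos (x + t • y)
    have hyx : ⟪T y, x⟫ = ⟪T x, y⟫ := by
      rw [hsym y x, real_inner_comm]
    have : ⟪T (x + t • y), x + t • y⟫
        = ⟪T x, x⟫ + t * ⟪T x, y⟫ + (t * ⟪T x, y⟫ + t * t * ⟪T y, y⟫) := by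
      simp [map_add, map_smul, inner_add_add_self, inner_add_left, inner_add_right,
        inner_smul_left, inner_smul_right, hyx]
      ring
    rw [this] at h0
    nlinarith
  have hd := discrim_le_zero key
  rw [discrim] at hd
  nlinarith

/-- Existence of a maximal eigenvector of a compact positive symmetric operator
on a closed invariant subspace. -/
lemma exists_eigen {F : Type*} [NormedAddCommGroup F] [InnerProductSpace ℝ F]
    [CompleteSpace F]
    (T : F →L[ℝ] F) (hTc : IsCompactOperator T)
    (hsym : ∀ x y : F, ⟪T x, y⟫ = ⟪x, T y⟫) (hpos : ∀ x : F, 0 ≤ ⟪T x, x⟫)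
    (V : Submodule ℝ F) (hVc : IsClosed (V : Set F)) (hVinv : ∀ v ∈ V, T v ∈ V)
    (hne : ∃ x ∈ V, ‖x‖ = 1) :
    ∃ x ∈ V, ‖x‖ = 1 ∧
      T x = (sSup {r : ℝ | ∃ y ∈ V, ‖y‖ = 1 ∧ ⟪T y, y⟫ = r}) • x := by
  set S : Set ℝ := {r : ℝ | ∃ y ∈ V, ‖y‖ = 1 ∧ ⟪T y, y⟫ = r} with hS
  obtain ⟨x₀, hx₀V, hx₀n⟩ := hne
  have hSne : S.Nonempty := ⟨_, x₀, hx₀V, hx₀n, rfl⟩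
  have hSbdd : BddAbove S := by
    refine ⟨‖T‖, ?_⟩
    rintro r ⟨y, -, hy, rfl⟩
    calc ⟪T y, y⟫ ≤ ‖T y‖ * ‖y‖ := real_inner_le_norm _ _
      _ ≤ ‖T‖ * ‖y‖ * ‖y‖ := by gcongr; exact T.le_opNorm y
      _ = ‖T‖ := by rw [hy]; ring
  set M : ℝ := sSup S with hM
  have hM0 : 0 ≤ M := le_trans (hpos x₀) (le_csSup hSbdd ⟨x₀, hx₀V, hx₀n, rfl⟩)
  -- the quadratic form bound on V
  have hqb : ∀ v ∈ V, ⟪T v, v⟫ ≤ M * ‖v‖ ^ 2 := by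
    intro v hv
    rcases eq_or_ne v 0 with rfl | hv0
    · simp
    · have hnv : ‖v‖ ≠ 0 := norm_ne_zero_iff.mpr hv0
      have hu : (‖v‖⁻¹ • v) ∈ V := V.smul_mem _ hv
      have hun : ‖(‖v‖⁻¹ • v)‖ = 1 := by
        rw [norm_smul, norm_inv, norm_norm, inv_mul_cancel₀ hnv]
      have hle : ⟪T (‖v‖⁻¹ • v), ‖v‖⁻¹ • v⟫ ≤ M :=
        le_csSup hSbdd ⟨_, hu, hun, rfl⟩
      have : ⟪T (‖v‖⁻¹ • v), ‖v‖⁻¹ • v⟫ = ‖v‖⁻¹ * ‖v‖⁻¹ * ⟪T v, v⟫ := by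
        simp [map_smul, inner_smul_left, inner_smul_right]; ring
      rw [this] at hle
      have h2 : ⟪T v, v⟫ = ‖v‖ ^ 2 * (‖v‖⁻¹ * ‖v‖⁻¹ * ⟪T v, v⟫) := by
        field_simp
      rw [h2]
      calc ‖v‖ ^ 2 * (‖v‖⁻¹ * ‖v‖⁻¹ * ⟪T v, v⟫) ≤ ‖v‖ ^ 2 * M :=
            mul_le_mul_of_nonneg_left hle (by positivity)
        _ = M * ‖v‖ ^ 2 := by ring
  -- operator norm bound on V
  have hnb : ∀ v ∈ V, ‖T v‖ ≤ M * ‖v‖ := by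
    intro v hv
    rcases eq_or_ne (T v) 0 with h0 | h0
    · rw [h0]; simp; positivity
    · have hTvV : T v ∈ V := hVinv v hv
      have hcs := posCS T hsym hpos v (T v)
      have h1 : ⟪T v, T v⟫ = ‖T v‖ ^ 2 := real_inner_self_eq_norm_sq _
      have h2 : ⟪T v, v⟫ ≤ M * ‖v‖ ^ 2 := hqb v hv
      have h3 : ⟪T (T v), T v⟫ ≤ M * ‖T v‖ ^ 2 := hqb _ hTvV
      have hTv0 : 0 < ‖T v‖ := norm_pos_iff.mpr h0
      have h4 : ⟪T v, v⟫ * ⟪T (T v), T v⟫ ≤ (M * ‖v‖ ^ 2) * (M * ‖T v‖ ^ 2) :=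
        mul_le_mul h2 h3 (hpos (T v)) (by positivity)
      have h5 : 0 ≤ M * ‖v‖ := by positivity
      have h6 : ‖T v‖ ^ 2 ≤ (M * ‖v‖) ^ 2 := by
        nlinarith [mul_pos hTv0 hTv0]
      nlinarith [h6, h5, hTv0]
  -- handle M = 0
  rcases eq_or_lt_of_le hM0 with hM0' | hMpos
  · refine ⟨x₀, hx₀V, hx₀n, ?_⟩
    have : ‖T x₀‖ ≤ M * ‖x₀‖ := hnb x₀ hx₀V
    rw [← hM0', zero_mul] at this
    have hTx₀ : T x₀ = 0 := norm_le_zero_iff.mp this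
    rw [hTx₀, ← hM0', zero_smul]
  -- maximizing sequence
  have hseq : ∀ n : ℕ, ∃ x ∈ V, ‖x‖ = 1 ∧ M - 1 / (n + 1) < ⟪T x, x⟫ := by
    intro n
    have hlt : M - 1 / (n + 1) < M := by
      have : (0:ℝ) < 1 / (n + 1) := by positivity
      linarith
    obtain ⟨r, hrS, hr⟩ := exists_lt_of_lt_csSup hSne hlt
    obtain ⟨y, hyV, hyn, rfl⟩ := hrS
    exact ⟨y, hyV, hyn, hr⟩
  choose u huV hun hugt using hseq
  have huub : ∀ n, ⟪T (u n), u n⟫ ≤ M := fun n =>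
    le_csSup hSbdd ⟨u n, huV n, hun n, rfl⟩
  have htend : Tendsto (fun n => ⟪T (u n), u n⟫) atTop (nhds M) := by
    have h1 : Tendsto (fun n : ℕ => M - 1 / (n + 1)) atTop (nhds M) := by
      have := tendsto_one_div_add_atTop_nhds_zero_nat (𝕜 := ℝ)
      have := (tendsto_const_nhds (x := M) (f := atTop (α := ℕ))).sub this
      simpa using this
    exact tendsto_of_tendsto_of_tendsto_of_le_of_le h1 tendsto_const_nhds
      (fun n => (hugt n).le) huub
  -- the crucial estimate : T uₙ - M uₙ → 0
  have hdiff : Tendsto (fun n => T (u n) - M • u n) atTop (nhds 0) := by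
    rw [tendsto_zero_iff_norm_tendsto_zero]
    have hb : ∀ n, ‖T (u n) - M • u n‖ ^ 2 ≤ 2 * M ^ 2 - 2 * M * ⟪T (u n), u n⟫ := by
      intro n
      have hexp : ‖T (u n) - M • u n‖ ^ 2
          = ‖T (u n)‖ ^ 2 - 2 * M * ⟪T (u n), u n⟫ + M ^ 2 * ‖u n‖ ^ 2 := by
        rw [← real_inner_self_eq_norm_sq, ← real_inner_self_eq_norm_sq,
          ← real_inner_self_eq_norm_sq]
        rw [inner_sub_sub_self]
        simp only [inner_smul_left, inner_smul_right, RCLike.star_def, starRingEnd_apply,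
          star_trivial]
        rw [real_inner_comm (u n) (T (u n))]
        ring
      have hTn : ‖T (u n)‖ ≤ M := by
        have := hnb (u n) (huV n)
        rwa [hun n, mul_one] at this
      have : ‖T (u n)‖ ^ 2 ≤ M ^ 2 := by nlinarith [norm_nonneg (T (u n))]
      rw [hexp, hun n]
      nlinarith
    have hsq : Tendsto (fun n => ‖T (u n) - M • u n‖ ^ 2) atTop (nhds 0) := by
      have h2 : Tendsto (fun n => 2 * M ^ 2 - 2 * M * ⟪T (u n), u n⟫) atTop (nhds 0) := by
        have := htend.const_mul (2 * M)
        have := (tendsto_const_nhds (x := 2 * M ^ 2) (f := atTop (α := ℕ))).sub this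
        simpa [sq] using (by ring_nf at this ⊢; convert this using 2)
      exact tendsto_of_tendsto_of_tendsto_of_le_of_le tendsto_const_nhds h2
        (fun n => by positivity) hb
    have := hsq.sqrt
    simpa [Real.sqrt_sq (norm_nonneg _)] using this
  -- compactness: extract a convergent subsequence of T uₙ
  obtain ⟨K, hKc, hK⟩ := hTc.image_subset_compact_of_bounded
    (Metric.isBounded_closedBall (x := (0:F)) (r := 1))
  have hmem : ∀ n, T (u n) ∈ K := fun n =>
    hK ⟨u n, by simp [Metric.mem_closedBall, dist_eq_norm, (hun n).le], rfl⟩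
  obtain ⟨y, -, φ, hφ, hconv⟩ := hKc.isSeqCompact hmem
  -- uₙ converges to M⁻¹ y along the subsequence
  have hu_conv : Tendsto (fun n => u (φ n)) atTop (nhds (M⁻¹ • y)) := by
    have h1 : Tendsto (fun n => T (u (φ n)) - M • u (φ n)) atTop (nhds 0) :=
      hdiff.comp hφ.tendsto_atTop
    have h2 : Tendsto (fun n => M • u (φ n)) atTop (nhds y) := by
      have := hconv.sub h1
      simpa using this
    have h3 := h2.const_smul M⁻¹
    simpa [smul_smul, inv_mul_cancel₀ hMpos.ne', one_smul] using h3
  set x := M⁻¹ • y with hx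
  have hxV : x ∈ V := by
    have : ∀ n, u (φ n) ∈ V := fun n => huV (φ n)
    exact hVc.mem_of_tendsto hu_conv (Eventually.of_forall this)
  have hxn : ‖x‖ = 1 := by
    have := (continuous_norm.tendsto _).comp hu_conv
    have h1 : Tendsto (fun n => ‖u (φ n)‖) atTop (nhds ‖x‖) := this
    have h2 : Tendsto (fun n : ℕ => (1:ℝ)) atTop (nhds ‖x‖) := by
      simpa [hun] using h1
    exact tendsto_nhds_unique h2 tendsto_const_nhds
  refine ⟨x, hxV, hxn, ?_⟩
  have hTx : Tendsto (fun n => T (u (φ n))) atTop (nhds (T x)) :=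
    (T.continuous.tendsto _).comp hu_conv
  have : T x = y := tendsto_nhds_unique hTx hconv
  rw [this, hx, smul_smul, mul_inv_cancel₀ hMpos.ne', one_smul]

/-- Spectral theorem (greedy construction) for a compact, symmetric, strictly positive
operator on an infinite-dimensional real Hilbert space. -/
theorem spectral {F : Type*} [NormedAddCommGroup F] [InnerProductSpace ℝ F]
    [CompleteSpace F] (hinfd : ¬ FiniteDimensional ℝ F)
    (T : F →L[ℝ] F) (hTc : IsCompactOperator T)
    (hsym : ∀ x y : F, ⟪T x, y⟫ = ⟪x, T y⟫)
    (hpos : ∀ x : F, x ≠ 0 → 0 < ⟪T x, x⟫) :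
    ∃ (f : ℕ → F) (μ : ℕ → ℝ), Orthonormal ℝ f ∧ (∀ n, 0 < μ n) ∧
      (∀ n, T (f n) = μ n • f n) ∧ Tendsto μ atTop (nhds 0) ∧
      (Submodule.span ℝ (Set.range f)).topologicalClosure = ⊤ := by
  classical
  have hpos' : ∀ x : F, 0 ≤ ⟪T x, x⟫ := by
    intro x
    rcases eq_or_ne x 0 with rfl | hx
    · simp
    · exact (hpos x hx).le
  -- the choice function
  let P : Submodule ℝ F → Prop := fun V =>
    IsClosed (V : Set F) ∧ (∀ v ∈ V, T v ∈ V) ∧ ∃ x ∈ V, ‖x‖ = 1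
  let g : Submodule ℝ F → F := fun V =>
    if h : P V then (exists_eigen T hTc hsym hpos' V h.1 h.2.1 h.2.2).choose else 0
  have gspec : ∀ V : Submodule ℝ F, P V → g V ∈ V ∧ ‖g V‖ = 1 ∧
      T (g V) = (sSup {r : ℝ | ∃ y ∈ V, ‖y‖ = 1 ∧ ⟪T y, y⟫ = r}) • g V := by
    intro V h
    have := (exists_eigen T hTc hsym hpos' V h.1 h.2.1 h.2.2).choose_spec
    simpa only [g, dif_pos h] using this
  -- the increasing family of subspaces
  let W : ℕ → Submodule ℝ F := fun n => Nat.rec (motive := fun _ => Submodule ℝ F) ⊥ (fun _ Wn => Wn ⊔ (ℝ ∙ g Wnᗮ)) n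
  have hWs : ∀ n, W (n + 1) = W n ⊔ (ℝ ∙ g ((W n)ᗮ)) := fun n => rfl
  let f : ℕ → F := fun n => g ((W n)ᗮ)
  let μ : ℕ → ℝ := fun n => sSup {r : ℝ | ∃ y ∈ (W n)ᗮ, ‖y‖ = 1 ∧ ⟪T y, y⟫ = r}
  -- the main induction
  have key : ∀ n, FiniteDimensional ℝ (W n) ∧ ∀ v ∈ W n, T v ∈ W n := by
    intro n
    induction n with
    | zero =>
      constructor
      · exact inferInstanceAs (FiniteDimensional ℝ (⊥ : Submodule ℝ F))
      · intro v hv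
        have hv0 : v = 0 := by
          have h' : v ∈ (⊥ : Submodule ℝ F) := hv
          simpa using h'
        show T v ∈ (⊥ : Submodule ℝ F)
        simp [hv0]
    | succ n ih =>
      obtain ⟨ihfd, ihinv⟩ := ih
      -- P holds for (W n)ᗮ
      have hP : P ((W n)ᗮ) := by
        refine ⟨Submodule.isClosed_orthogonal _, ?_, ?_⟩
        · intro v hv
          rw [Submodule.mem_orthogonal] at hv ⊢
          intro u hu
          rw [real_inner_comm, hsym]
          rw [real_inner_comm]
          exact hv (T u) (ihinv u hu)
        · -- (W n)ᗮ contains a unit vector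
          haveI : CompleteSpace (W n) := FiniteDimensional.complete ℝ (W n)
          have hne : (W n)ᗮ ≠ ⊥ := by
            intro h
            have htop : W n = ⊤ := (Submodule.orthogonal_eq_bot_iff).mp h
            apply hinfd
            have : FiniteDimensional ℝ (⊤ : Submodule ℝ F) := htop ▸ ihfd
            exact (Submodule.topEquiv (R := ℝ) (M := F)).finiteDimensional
          obtain ⟨v, hvmem, hv0⟩ := Submodule.exists_mem_ne_zero_of_ne_bot hne
          refine ⟨‖v‖⁻¹ • v, Submodule.smul_mem _ _ hvmem, ?_⟩
          rw [norm_smul, norm_inv, norm_norm, inv_mul_cancel₀ (norm_ne_zero_iff.mpr hv0)]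
      obtain ⟨hfmem, hfnorm, hfeig⟩ := gspec _ hP
      constructor
      · rw [hWs n]
        haveI : FiniteDimensional ℝ (ℝ ∙ f n) := inferInstance
        exact Submodule.finiteDimensional_sup (W n) (ℝ ∙ f n)
      · intro v hv
        rw [hWs n] at hv ⊢
        obtain ⟨w, hw, z, hz, rfl⟩ := Submodule.mem_sup.mp hv
        obtain ⟨c, rfl⟩ := Submodule.mem_span_singleton.mp hz
        rw [map_add, map_smul]
        refine Submodule.add_mem_sup (ihinv w hw) ?_
        rw [hfeig]
        rw [smul_smul]
        exact Submodule.smul_mem _ _ (Submodule.mem_span_singleton_self _)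
  -- P holds at every stage
  have hPn : ∀ n, P ((W n)ᗮ) := by
    intro n
    obtain ⟨ihfd, ihinv⟩ := key n
    refine ⟨Submodule.isClosed_orthogonal _, ?_, ?_⟩
    · intro v hv
      rw [Submodule.mem_orthogonal] at hv ⊢
      intro u hu
      rw [real_inner_comm, hsym, real_inner_comm]
      exact hv (T u) (ihinv u hu)
    · haveI : CompleteSpace (W n) := FiniteDimensional.complete ℝ (W n)
      have hne : (W n)ᗮ ≠ ⊥ := by
        intro h
        have htop : W n = ⊤ := (Submodule.orthogonal_eq_bot_iff).mp h
        apply hinfd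
        have : FiniteDimensional ℝ (⊤ : Submodule ℝ F) := htop ▸ ihfd
        exact (Submodule.topEquiv (R := ℝ) (M := F)).finiteDimensional
      obtain ⟨v, hvmem, hv0⟩ := Submodule.exists_mem_ne_zero_of_ne_bot hne
      refine ⟨‖v‖⁻¹ • v, Submodule.smul_mem _ _ hvmem, ?_⟩
      rw [norm_smul, norm_inv, norm_norm, inv_mul_cancel₀ (norm_ne_zero_iff.mpr hv0)]
  have hfmem : ∀ n, f n ∈ (W n)ᗮ := fun n => (gspec _ (hPn n)).1
  have hfnorm : ∀ n, ‖f n‖ = 1 := fun n => (gspec _ (hPn n)).2.1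
  have hfeig : ∀ n, T (f n) = μ n • f n := fun n => (gspec _ (hPn n)).2.2
  have hf0 : ∀ n, f n ≠ 0 := fun n => by
    intro h; have := hfnorm n; rw [h, norm_zero] at this; norm_num at this
  have hWmono : Monotone W := by
    apply monotone_nat_of_le_succ
    intro n
    rw [hWs n]
    exact le_sup_left
  have hfW : ∀ n, f n ∈ W (n + 1) := by
    intro n
    rw [hWs n]
    exact Submodule.mem_sup_right (Submodule.mem_span_singleton_self _)
  -- orthonormality
  have horth : Orthonormal ℝ f := by
    rw [orthonormal_iff_ite]
    have hwlog : ∀ i j : ℕ, i < j → ⟪f i, f j⟫ = 0 := by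
      intro i j hij
      have h1 : f i ∈ W j := hWmono hij (hfW i)
      have h2 := (Submodule.mem_orthogonal _ _).mp (hfmem j)
      exact h2 (f i) h1
    intro i j
    rcases lt_trichotomy i j with h | rfl | h
    · rw [if_neg h.ne]; exact hwlog i j h
    · rw [if_pos rfl]
      rw [real_inner_self_eq_norm_sq, hfnorm]; norm_num
    · rw [if_neg h.ne']
      rw [real_inner_comm]; exact hwlog j i h
  -- positivity of eigenvalues
  have hμval : ∀ n, μ n = ⟪T (f n), f n⟫ := by
    intro n
    rw [hfeig n, real_inner_smul_left, real_inner_self_eq_norm_sq, hfnorm]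
    norm_num
  have hμpos : ∀ n, 0 < μ n := fun n => (hμval n).symm ▸ hpos (f n) (hf0 n)
  -- the upper bound property
  have hub : ∀ n, ∀ x ∈ (W n)ᗮ, ‖x‖ = 1 → ⟪T x, x⟫ ≤ μ n := by
    intro n x hx hxn
    apply le_csSup
    · refine ⟨‖T‖, ?_⟩
      rintro r ⟨y, -, hy, rfl⟩
      calc ⟪T y, y⟫ ≤ ‖T y‖ * ‖y‖ := real_inner_le_norm _ _
        _ ≤ ‖T‖ * ‖y‖ * ‖y‖ := by gcongr; exact T.le_opNorm y
        _ = ‖T‖ := by rw [hy]; ring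
    · exact ⟨x, hx, hxn, rfl⟩
  -- T (f n) → 0
  have hTf : Tendsto (fun n => T (f n)) atTop (nhds 0) := by
    apply tendsto_of_subseq_tendsto
    intro ns hns
    obtain ⟨K, hKc, hK⟩ := hTc.image_subset_compact_of_bounded
      (Metric.isBounded_closedBall (x := (0:F)) (r := 1))
    have hmem : ∀ k, T (f (ns k)) ∈ K := fun k =>
      hK ⟨f (ns k), by simp [Metric.mem_closedBall, dist_eq_norm, (hfnorm (ns k)).le], rfl⟩
    obtain ⟨y, -, φ, hφ, hconv⟩ := hKc.isSeqCompact hmem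
    refine ⟨φ, ?_⟩
    -- show y = 0
    have hy0 : y = 0 := by
      have hinner : ∀ z : F, ⟪y, z⟫ = 0 := by
        intro z
        have hbessel : Summable fun i => ‖⟪f i, T z⟫‖ ^ 2 :=
          horth.inner_products_summable _
        have h1 : Tendsto (fun m => ‖⟪f m, T z⟫‖ ^ 2) atTop (nhds 0) :=
          hbessel.tendsto_atTop_zero
        have h2 : Tendsto (fun m => ⟪f m, T z⟫) atTop (nhds 0) := by
          rw [tendsto_zero_iff_norm_tendsto_zero]
          have := h1.sqrt
          simpa [Real.sqrt_sq_eq_abs] using this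
        have h3 : Tendsto (fun k => ⟪f (ns (φ k)), T z⟫) atTop (nhds 0) :=
          h2.comp ((hns.comp hφ.tendsto_atTop))
        have h4 : Tendsto (fun k => ⟪T (f (ns (φ k))), z⟫) atTop (nhds ⟪y, z⟫) :=
          ((Continuous.inner continuous_id continuous_const).tendsto y).comp hconv
        have h5 : (fun k => ⟪T (f (ns (φ k))), z⟫) = fun k => ⟪f (ns (φ k)), T z⟫ := by
          funext k; exact hsym _ _
        rw [h5] at h4
        exact tendsto_nhds_unique h4 h3
      have := hinner y
      rwa [inner_self_eq_zero] at this
    rw [← hy0]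
    exact hconv
  -- μ → 0
  have hμ0 : Tendsto μ atTop (nhds 0) := by
    have : μ = fun n => ‖T (f n)‖ := by
      funext n
      rw [hfeig n, norm_smul, hfnorm, mul_one, Real.norm_eq_abs,
        abs_of_pos (hμpos n)]
    rw [this]
    rw [← norm_zero (E := F)]
    exact (continuous_norm.tendsto _).comp hTf
  -- completeness
  refine ⟨f, μ, horth, hμpos, hfeig, hμ0, ?_⟩
  rw [Submodule.topologicalClosure_eq_top_iff]
  by_contra hne
  obtain ⟨v, hvmem, hv0⟩ := Submodule.exists_mem_ne_zero_of_ne_bot hne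
  set x := ‖v‖⁻¹ • v with hx
  have hxmem : x ∈ (Submodule.span ℝ (Set.range f))ᗮ := Submodule.smul_mem _ _ hvmem
  have hxn : ‖x‖ = 1 := by
    rw [hx, norm_smul, norm_inv, norm_norm, inv_mul_cancel₀ (norm_ne_zero_iff.mpr hv0)]
  have hWE : ∀ n, W n ≤ Submodule.span ℝ (Set.range f) := by
    intro n
    induction n with
    | zero => exact bot_le
    | succ n ih =>
      rw [hWs n]
      refine sup_le ih ?_
      rw [Submodule.span_singleton_le_iff_mem]
      exact Submodule.subset_span ⟨n, rfl⟩
  have hxWn : ∀ n, x ∈ (W n)ᗮ := fun n =>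
    Submodule.orthogonal_le (hWE n) hxmem
  have hxpos : 0 < ⟪T x, x⟫ := hpos x (by
    intro h; rw [h, norm_zero] at hxn; norm_num at hxn)
  have hle : ∀ n, ⟪T x, x⟫ ≤ μ n := fun n => hub n x (hxWn n) hxn
  have := ge_of_tendsto hμ0 (Eventually.of_forall hle)
  linarith


/-- Simultaneous diagonalization: existence of an orthonormal basis of `X`
consisting of elements of `Y`, simultaneously orthogonal in `Y`, with
`‖e n‖⁻¹ → 0`. -/
theorem stmt0 {X Y : Type*}
    [NormedAddCommGroup X] [InnerProductSpace ℝ X] [CompleteSpace X]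
    [TopologicalSpace.SeparableSpace X]
    [NormedAddCommGroup Y] [InnerProductSpace ℝ Y] [CompleteSpace Y]
    [TopologicalSpace.SeparableSpace Y]
    (hinfd : ¬ FiniteDimensional ℝ X)
    (ι : Y →L[ℝ] X) (hinj : Function.Injective ι)
    (hcomp : IsCompactOperator ι) (hdense : DenseRange ι) :
    ∃ e : ℕ → Y,
      Orthonormal ℝ (fun n => ι (e n)) ∧
      (Submodule.span ℝ (Set.range fun n => ι (e n))).topologicalClosure = ⊤ ∧
      (∀ n m, n ≠ m → @inner ℝ Y _ (e n) (e m) = 0) ∧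
      Tendsto (fun n => ‖e n‖⁻¹) atTop (nhds 0) := by
  classical
  let A : X →L[ℝ] Y := ContinuousLinearMap.adjoint ι
  let T : X →L[ℝ] X := ι.comp A
  have hTapp : ∀ x, T x = ι (A x) := fun x => rfl
  have hsym : ∀ x y : X, ⟪T x, y⟫ = ⟪x, T y⟫ := fun x y =>
    (ContinuousLinearMap.adjoint_inner_right ι (A x) y).symm.trans
      (ContinuousLinearMap.adjoint_inner_left ι (A y) x)
  have hAinj : ∀ x : X, x ≠ 0 → A x ≠ 0 := by
    intro x hx hAx
    apply hx
    have hz : ∀ z : X, ⟪x, z⟫ = 0 := by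
      have hclosed : IsClosed {z : X | ⟪x, z⟫ = 0} :=
        isClosed_eq (Continuous.inner continuous_const continuous_id) continuous_const
      have hsub : Set.range ι ⊆ {z : X | ⟪x, z⟫ = 0} := by
        rintro _ ⟨u, rfl⟩
        show ⟪x, ι u⟫ = 0
        rw [← ContinuousLinearMap.adjoint_inner_left ι u x]
        show ⟪A x, u⟫ = 0
        rw [hAx, inner_zero_left]
      have h1 : closure (Set.range ι) ⊆ {z : X | ⟪x, z⟫ = 0} :=
        closure_minimal hsub hclosed
      intro z
      exact h1 (hdense.closure_range ▸ Set.mem_univ z : z ∈ closure (Set.range ι))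
    have := hz x
    rwa [inner_self_eq_zero] at this
  have hpos : ∀ x : X, x ≠ 0 → 0 < ⟪T x, x⟫ := by
    intro x hx
    have h1 : ⟪T x, x⟫ = ‖A x‖ ^ 2 := by
      rw [hTapp]
      rw [← ContinuousLinearMap.adjoint_inner_right ι (A x) x]
      exact real_inner_self_eq_norm_sq _
    rw [h1]
    have h2 : 0 < ‖A x‖ := norm_pos_iff.mpr (hAinj x hx)
    positivity
  have hTc : IsCompactOperator ⇑T := by
    have h := hcomp.comp_clm A
    rwa [← ContinuousLinearMap.coe_comp'] at h
  obtain ⟨f, μ, horth, hμpos, hfeig, hμ0, hspan⟩ := spectral hinfd T hTc hsym hpos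
  refine ⟨fun n => (μ n)⁻¹ • A (f n), ?_, ?_, ?_, ?_⟩
  · have hιe : (fun n => ι ((μ n)⁻¹ • A (f n))) = f := by
      funext n
      rw [map_smul, ← hTapp, hfeig, smul_smul, inv_mul_cancel₀ (hμpos n).ne', one_smul]
    rw [hιe]; exact horth
  · have hιe : (fun n => ι ((μ n)⁻¹ • A (f n))) = f := by
      funext n
      rw [map_smul, ← hTapp, hfeig, smul_smul, inv_mul_cancel₀ (hμpos n).ne', one_smul]
    rw [hιe]; exact hspan
  · intro n m hnm
    show ⟪(μ n)⁻¹ • A (f n), (μ m)⁻¹ • A (f m)⟫ = 0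
    rw [real_inner_smul_left, real_inner_smul_right]
    have h1 : ⟪A (f n), A (f m)⟫ = ⟪f n, T (f m)⟫ :=
      ContinuousLinearMap.adjoint_inner_left ι (A (f m)) (f n)
    have h2 : ⟪f n, f m⟫ = 0 := by
      have := (orthonormal_iff_ite.mp horth) n m
      rwa [if_neg hnm] at this
    rw [h1, hfeig, real_inner_smul_right, h2, mul_zero, mul_zero, mul_zero]
  · have hen : ∀ n, ‖(μ n)⁻¹ • A (f n)‖⁻¹ = Real.sqrt (μ n) := by
      intro n
      have hA2 : ‖A (f n)‖ ^ 2 = μ n := by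
        rw [← real_inner_self_eq_norm_sq]
        have h1 : ⟪A (f n), A (f n)⟫ = ⟪f n, T (f n)⟫ :=
          ContinuousLinearMap.adjoint_inner_left ι (A (f n)) (f n)
        rw [h1, hfeig, real_inner_smul_right, real_inner_self_eq_norm_sq, horth.1 n]
        ring
      have hAn : ‖A (f n)‖ = Real.sqrt (μ n) := by
        rw [← hA2, Real.sqrt_sq (norm_nonneg _)]
      have hs0 : (0:ℝ) < Real.sqrt (μ n) := Real.sqrt_pos.mpr (hμpos n)
      rw [norm_smul, norm_inv, Real.norm_eq_abs, abs_of_pos (hμpos n), hAn,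
        mul_inv, inv_inv]
      field_simp
      rw [Real.sq_sqrt (hμpos n).le]
    have heq : (fun n => ‖(μ n)⁻¹ • A (f n)‖⁻¹) = fun n => Real.sqrt (μ n) :=
      funext hen
    rw [heq]
    have := (Real.continuous_sqrt.tendsto 0).comp hμ0
    simpa [Function.comp_def] using this
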